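/- arXiv:2602.05290 — 5 statements merged into one kernel-verified Lean document; each statement's English description precedes it below -/
import Mathlib

section
/- Let G₁ and G₂ be groups with a common subgroup C that is almost malnormal in each Gᵢ (i.e., for every g ∈ Gᵢ \ C, the intersection C ∩ gCg⁻¹ is finite). Then C is almost malnormal in the amalgamated free product G = G₁ ∗_C G₂. -/
open Monoid CoprodI Subgroup Function List Monoid.PushoutI

section Aux

variable {ι : Type*} {G : ι → Type*} [∀ i, Group (G i)] {H : Type*} [Group H]

namespace Monoid.CoprodI.NeWord

theorem inv_toList' {i j} (w : NeWord G i j) :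
    w.inv.toList = (w.toList.map (fun p => (⟨p.1, p.2⁻¹⟩ : Σ i, G i))).reverse := by
  induction w with
  | singleton x h => simp [NeWord.inv]
  | append w₁ hne w₂ ih₁ ih₂ => simp [NeWord.inv, ih₁, ih₂]

theorem replaceHead_toList' {i j} (w : NeWord G i j) :
    ∀ (x : G i) (h : x ≠ 1),
      (NeWord.replaceHead x h w).toList = ⟨i, x⟩ :: w.toList.tail := by
  induction w with
  | singleton y hy => intro x h; rfl
  | append w₁ hne w₂ ih₁ ih₂ =>
    intro x h
    simp only [NeWord.replaceHead, NeWord.toList, ih₁]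
    rw [List.cons_append, List.tail_append_of_ne_nil (toList_ne_nil w₁)]

end Monoid.CoprodI.NeWord

variable (φ : ∀ i, H →* G i)

theorem key_lemma (hφ : ∀ i, Function.Injective (φ i))
    (w : Word G) (hred : Reduced φ w) (hne : w ≠ Word.empty) (c c' : H)
    (heq : base φ c * ofCoprodI w.prod = ofCoprodI w.prod * base φ c') :
    ∃ (i : ι) (g : G i), w.toList.head? = some ⟨i, g⟩ ∧
      g⁻¹ * φ i c * g ∈ (φ i).range := by
  induction w using Word.consRecOn with
  | empty => exact absurd rfl hne
  | cons i g t h2 h1 _ =>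
    refine ⟨i, g, by simp [Word.cons], ?_⟩
    have hgr : g ∉ (φ i).range := hred ⟨i, g⟩ (List.mem_cons_self)
    have htred : Reduced φ t := fun p hp => hred p (List.mem_cons_of_mem _ hp)
    set P : PushoutI φ := ofCoprodI t.prod with hP
    set x : G i := g⁻¹ * φ i c * g with hxdef
    have hh : ofCoprodI (Word.cons g t h2 h1).prod = of i g * P := by
      rw [Word.prod_cons, map_mul, ofCoprodI_of]
    have hx : of (φ := φ) i x * P = P * base φ c' := by
      have h0 : base φ c * (of i g * P) = of i g * P * base φ c' := by
        rw [← hh]; exact heq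
      have h0' : of (φ := φ) i (φ i c) * (of i g * P) = of i g * P * base φ c' := by
        rwa [of_apply_eq_base φ i]
      have hcg : of (φ := φ) i (φ i c) * of i g = of i g * of i x := by
        rw [← map_mul, ← map_mul]
        congr 1
        rw [hxdef]; group
      rw [← mul_assoc, hcg] at h0'
      rw [mul_assoc, mul_assoc] at h0'
      exact mul_left_cancel h0'
    by_cases ht : t.toList = []
    · have hP1 : P = 1 := by
        rw [hP]
        have : t.prod = 1 := by simp [Word.prod, ht]
        simp [this]
      rw [hP1, mul_one, one_mul, ← of_apply_eq_base φ i] at hx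
      exact ⟨c', (of_injective hφ i hx).symm⟩
    · by_contra hxr
      have hx1 : x ≠ 1 := fun h => hxr (h ▸ one_mem _)
      have htne : t ≠ Word.empty := by
        intro h; rw [h] at ht; exact ht rfl
      obtain ⟨j, l, n, hn⟩ := NeWord.of_word t htne
      have hnlist : n.toList = t.toList := by rw [← hn]; rfl
      -- the modified word `v`
      have hlast_mem : (⟨l, n.last⟩ : Σ i, G i) ∈ t.toList := by
        rw [← hnlist]
        exact List.mem_of_mem_getLast? (by rw [n.toList_getLast?]; rfl)
      have hlr : n.last ∉ (φ l).range := htred _ hlast_mem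
      have hne1 : n.last * φ l c' ∉ (φ l).range := by
        rintro ⟨y, hy⟩
        exact hlr ⟨y * c'⁻¹, by rw [map_mul, map_inv, hy]; group⟩
      have hmul_ne : (φ l c')⁻¹ * n.inv.head ≠ 1 := by
        rw [NeWord.inv_head]
        intro h
        apply hne1
        have : n.last * φ l c' = 1 := by
          have := congrArg (fun z => (n.last * z * n.last : G l)) h
          simpa [mul_assoc] using congrArg Inv.inv h
        rw [this]; exact one_mem _
      set m : NeWord G l j := n.inv.mulHead ((φ l c')⁻¹) hmul_ne with hm
      set v' : NeWord G j l := m.inv with hv'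
      set v : Word G := v'.toWord with hv
      have hvlist : v.toList = v'.toList := rfl
      have hmlist : m.toList = ⟨l, (φ l c')⁻¹ * n.inv.head⟩ :: n.inv.toList.tail :=
        NeWord.replaceHead_toList' n.inv _ hmul_ne
      -- membership description of v.toList
      have hvmem : ∀ p ∈ v.toList, p = (⟨l, n.last * φ l c'⟩ : Σ i, G i) ∨
          p ∈ t.toList := by
        intro p hp
        rw [hvlist, hv', NeWord.inv_toList', List.mem_reverse, List.mem_map] at hp
        obtain ⟨q, hq, rfl⟩ := hp
        rw [hmlist] at hq
        rcases List.mem_cons.mp hq with rfl | hq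
        · left
          rw [NeWord.inv_head]
          congr 1
          simp [mul_inv_rev]
        · right
          have hq' : q ∈ n.inv.toList := List.mem_of_mem_tail hq
          rw [NeWord.inv_toList', List.mem_reverse, List.mem_map] at hq'
          obtain ⟨r, hr, rfl⟩ := hq'
          simpa [← hnlist] using hr
      have hvred : Reduced φ v := by
        intro p hp
        rcases hvmem p hp with rfl | hp'
        · exact hne1
        · exact htred p hp'
      -- lengths
      have hνlen : v.toList.length = t.toList.length := by
        rw [hvlist, hv', NeWord.inv_toList', List.length_reverse, List.length_map, hmlist]
        rw [List.length_cons, NeWord.inv_toList', List.length_tail, List.length_reverse,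
          List.length_map, ← hnlist]
        have : n.toList.length ≠ 0 := by
          simpa [List.length_eq_zero_iff] using n.toList_ne_nil
        omega
      -- products
      have hvprod : ofCoprodI v.prod = P * base φ c' := by
        have h1 : v.prod = n.prod * CoprodI.of (φ l c') := by
          rw [hv]
          show v'.prod = _
          rw [hv', NeWord.inv_prod, hm, NeWord.mulHead_prod, NeWord.inv_prod,
            mul_inv_rev, inv_inv, map_inv, inv_inv]
        have h2 : n.prod = t.prod := by rw [← hn]; rfl
        rw [h1, h2, map_mul, ofCoprodI_of, of_apply_eq_base φ l, hP]
      -- the word u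
      set u : Word G := Word.cons x t h2 hx1 with hu
      have hured : Reduced φ u := by
        intro p hp
        rw [hu] at hp
        rcases List.mem_cons.mp hp with rfl | hp'
        · exact hxr
        · exact htred p hp'
      have huprod : ofCoprodI u.prod = of i x * P := by
        rw [hu, Word.prod_cons, map_mul, ofCoprodI_of]
      -- compare normal words
      obtain ⟨d⟩ := Monoid.PushoutI.NormalWord.transversal_nonempty φ hφ
      obtain ⟨wu, hwu1, hwu2⟩ := hured.exists_normalWord_prod_eq d
      obtain ⟨wv, hwv1, hwv2⟩ := hvred.exists_normalWord_prod_eq d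
      have huv : wu = wv := by
        apply NormalWord.prod_injective
        rw [hwu1, hwv1, huprod, hvprod, hx]
      have hlen : u.toList.length = v.toList.length := by
        have h1 := congrArg List.length hwu2
        have h2 := congrArg List.length hwv2
        rw [huv] at h1
        rw [List.length_map, List.length_map] at h1 h2
        omega
      rw [hνlen] at hlen
      have : u.toList.length = t.toList.length + 1 := by simp [hu, Word.cons]
      omega

end Aux

/-- A subgroup `C` of a group `G` is *almost malnormal* if for every `g ∉ C`
the intersection `C ∩ gCg⁻¹` is finite. -/
def IsAlmostMalnormal {G : Type*} [Group G] (C : Subgroup G) : Prop :=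
  ∀ g : G, g ∉ C → Set.Finite {x : G | x ∈ C ∧ g⁻¹ * x * g ∈ C}

/-- If `C` embeds as an almost malnormal subgroup of both `G₁` and `G₂`, then the image of `C`
in the amalgamated free product `G₁ ∗_C G₂` is almost malnormal. -/
theorem almostMalnormal_amalgamated {C : Type*} [Group C] {G : Fin 2 → Type*}
    [∀ i, Group (G i)] (φ : ∀ i, C →* G i) (hinj : ∀ i, Function.Injective (φ i))
    (hmal : ∀ i, IsAlmostMalnormal (φ i).range) :
    IsAlmostMalnormal (Monoid.PushoutI.base φ).range := by
  classical
  intro g hg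
  obtain ⟨d⟩ := Monoid.PushoutI.NormalWord.transversal_nonempty φ hinj
  set W := Monoid.PushoutI.NormalWord.equiv (d := d) g with hW
  set w : Monoid.CoprodI.Word G := W.toWord with hw
  set h : C := W.head with hh
  have hgprod : Monoid.PushoutI.base φ h * Monoid.PushoutI.ofCoprodI w.prod = g := by
    have := (Monoid.PushoutI.NormalWord.equiv (d := d)).symm_apply_apply g
    exact this
  -- w is reduced
  have hred : Monoid.PushoutI.Reduced φ w := by
    intro p hp
    rintro ⟨y, hy⟩
    have hset : p.2 ∈ d.set p.1 := W.normalized p.1 p.2 hp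
    have hpne : p.2 ≠ 1 := w.ne_one p hp
    obtain ⟨q, hq, huniq⟩ := (d.compl p.1).existsUnique p.2
    have h1 := huniq ⟨⟨p.2, ⟨y, hy⟩⟩, ⟨1, d.one_mem p.1⟩⟩ (by simp)
    have h2 := huniq ⟨⟨1, one_mem _⟩, ⟨p.2, hset⟩⟩ (by simp)
    have : p.2 = (1 : G p.1) := by
      have := h1.trans h2.symm
      have := congrArg (fun z => (z.2 : G p.1)) this
      simpa using this.symm
    exact hpne this
  -- w is nonempty
  have hwe : w ≠ Monoid.CoprodI.Word.empty := by
    intro hemp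
    apply hg
    refine ⟨h, ?_⟩
    rw [← hgprod, hemp]
    simp
  have hnil : w.toList ≠ [] := by
    intro hl
    apply hwe
    rcases w with ⟨l, p1, p2⟩
    simp only at hl
    subst hl
    rfl
  obtain ⟨p, L, hL⟩ := List.exists_cons_of_ne_nil hnil
  obtain ⟨i, a⟩ := p
  have hhead : w.toList.head? = some ⟨i, a⟩ := by rw [hL]; rfl
  have har : a ∉ (φ i).range := hred ⟨i, a⟩ (by rw [hL]; exact List.mem_cons_self)
  have hT : Set.Finite {y : G i | y ∈ (φ i).range ∧ a⁻¹ * y * a ∈ (φ i).range} :=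
    hmal i a har
  set T := {y : G i | y ∈ (φ i).range ∧ a⁻¹ * y * a ∈ (φ i).range} with hTdef
  set S := {x : Monoid.PushoutI φ | x ∈ (Monoid.PushoutI.base φ).range ∧
      g⁻¹ * x * g ∈ (Monoid.PushoutI.base φ).range} with hS
  have main : ∀ x ∈ S, ∃ c : C, Monoid.PushoutI.base φ c = x ∧
      φ i (h⁻¹ * c * h) ∈ T := by
    rintro x ⟨⟨c, hc⟩, ⟨c', hc'⟩⟩
    refine ⟨c, hc, ⟨h⁻¹ * c * h, rfl⟩, ?_⟩
    -- base c * g = g * base c'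
    have hcg : Monoid.PushoutI.base φ c * g = g * Monoid.PushoutI.base φ c' := by
      rw [hc']
      rw [hc]
      group
    set Q := Monoid.PushoutI.ofCoprodI (φ := φ) w.prod with hQ
    have hQ' : Monoid.PushoutI.base φ (h⁻¹ * c * h) * Q = Q * Monoid.PushoutI.base φ c' := by
      have : Monoid.PushoutI.base φ (h⁻¹ * c * h) =
          (Monoid.PushoutI.base φ h)⁻¹ * Monoid.PushoutI.base φ c *
            Monoid.PushoutI.base φ h := by
        simp [map_mul, map_inv]
      rw [this]
      rw [← hgprod] at hcg
      -- hcg : base c * (base h * Q) = base h * Q * base c'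
      calc (Monoid.PushoutI.base φ h)⁻¹ * Monoid.PushoutI.base φ c *
            Monoid.PushoutI.base φ h * Q
          = (Monoid.PushoutI.base φ h)⁻¹ *
              (Monoid.PushoutI.base φ c * (Monoid.PushoutI.base φ h * Q)) := by group
        _ = (Monoid.PushoutI.base φ h)⁻¹ *
              (Monoid.PushoutI.base φ h * Q * Monoid.PushoutI.base φ c') := by rw [hcg]
        _ = Q * Monoid.PushoutI.base φ c' := by group
    obtain ⟨i', a', hhead', hmem⟩ := key_lemma φ hinj w hred hwe (h⁻¹ * c * h) c' hQ'
    rw [hhead] at hhead'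
    have hsig : (⟨i, a⟩ : Σ k, G k) = ⟨i', a'⟩ := Option.some_injective _ hhead'
    obtain ⟨rfl, ha⟩ := Sigma.mk.inj_iff.mp hsig
    have ha' : a = a' := eq_of_heq ha
    subst ha'
    exact hmem
  choose fc hfc1 hfc2 using main
  have : Finite T := hT.to_subtype
  have : Finite S := by
    refine Finite.of_injective (fun x : S => (⟨φ i (h⁻¹ * fc x x.2 * h), hfc2 x x.2⟩ : T)) ?_
    rintro ⟨x₁, hx₁⟩ ⟨x₂, hx₂⟩ hFeq
    have h1 : φ i (h⁻¹ * fc x₁ hx₁ * h) = φ i (h⁻¹ * fc x₂ hx₂ * h) := by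
      simpa using congrArg Subtype.val hFeq
    have h2 : fc x₁ hx₁ = fc x₂ hx₂ := by
      have := hinj i h1
      have := congrArg (fun z => h * z * h⁻¹) this
      simpa [mul_assoc] using this
    have := hfc1 x₁ hx₁
    rw [h2, hfc1 x₂ hx₂] at this
    exact Subtype.ext this.symm
  exact Set.toFinite S
end

section
/- Let G₁ and G₂ be groups with a common subgroup C that is malnormal in each Gᵢ (i.e., C ∩ gCg⁻¹ = {1} for every g ∈ Gᵢ \ C). Then C is malnormal in the amalgamated free product G = G₁ ∗_C G₂. -/
/-- A subgroup `C` of a group `G` is *malnormal* if `C ∩ gCg⁻¹ = {1}` for every `g ∉ C`. -/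
def IsMalnormal {G : Type*} [Group G] (C : Subgroup G) : Prop :=
  ∀ g : G, g ∉ C → ∀ x : G, x ∈ C → g⁻¹ * x * g ∈ C → x = 1

open Monoid Monoid.PushoutI Monoid.CoprodI List

private theorem ofCoprodI_word_prod {ι C : Type*} [Group C] {G : ι → Type*} [∀ i, Group (G i)]
    (φ : ∀ i, C →* G i) (w : Monoid.CoprodI.Word G) :
    ofCoprodI (φ := φ) w.prod
      = (w.toList.map fun l => Monoid.PushoutI.of (φ := φ) l.1 l.2).prod := by
  rw [Word.prod, map_list_prod, List.map_map]
  congr 1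

private theorem aux_conj {ι C : Type*} [Group C] {G : ι → Type*} [∀ i, Group (G i)]
    {φ : ∀ i, C →* G i} (hinj : ∀ i, Function.Injective (φ i))
    (hmal : ∀ i, IsMalnormal (φ i).range)
    {w : Monoid.CoprodI.Word G} (hred : Monoid.PushoutI.Reduced φ w) (hne : w.toList ≠ [])
    (a b : C)
    (heq : Monoid.PushoutI.base φ a * ofCoprodI w.prod
         = ofCoprodI w.prod * Monoid.PushoutI.base φ b) :
    a = 1 := by
  classical
  obtain ⟨L, hne1, hch⟩ := w
  cases L with
  | nil => exact absurd rfl hne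
  | cons p tl =>
  obtain ⟨i, g⟩ := p
  have hg : g ∉ (φ i).range := hred ⟨i, g⟩ List.mem_cons_self
  -- tail word
  let w' : Monoid.CoprodI.Word G :=
    ⟨tl, fun l hl => hne1 l (List.mem_cons_of_mem _ hl), hch.tail⟩
  have hhead : ∀ l ∈ tl.head?, i ≠ Sigma.fst l := by
    intro l hl
    cases tl with
    | nil => simp at hl
    | cons q tq =>
      simp only [List.head?_cons, Option.mem_def, Option.some.injEq] at hl
      subst hl
      exact (List.isChain_cons_cons.1 hch).1
  have hprod : ofCoprodI (φ := φ)
      (Monoid.CoprodI.Word.prod ⟨⟨i, g⟩ :: tl, hne1, hch⟩) =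
      Monoid.PushoutI.of (φ := φ) i g * ofCoprodI (φ := φ) w'.prod := by
    rw [ofCoprodI_word_prod, ofCoprodI_word_prod]
    simp [List.prod_cons]
    rfl
  set P : PushoutI φ := ofCoprodI (φ := φ) w'.prod with hP
  set k : G i := g⁻¹ * φ i a * g with hk
  have heq' : Monoid.PushoutI.of (φ := φ) i k * P = P * Monoid.PushoutI.base φ b := by
    have h2 : Monoid.PushoutI.of (φ := φ) i k
        = (Monoid.PushoutI.of (φ := φ) i g)⁻¹ * Monoid.PushoutI.base φ a
          * Monoid.PushoutI.of (φ := φ) i g := by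
      rw [hk]; simp [map_mul, of_apply_eq_base]
    rw [hprod] at heq
    rw [h2]
    calc (Monoid.PushoutI.of (φ := φ) i g)⁻¹ * Monoid.PushoutI.base φ a
          * Monoid.PushoutI.of (φ := φ) i g * P
        = (Monoid.PushoutI.of (φ := φ) i g)⁻¹
            * (Monoid.PushoutI.base φ a * (Monoid.PushoutI.of (φ := φ) i g * P)) := by group
      _ = (Monoid.PushoutI.of (φ := φ) i g)⁻¹
            * (Monoid.PushoutI.of (φ := φ) i g * P * Monoid.PushoutI.base φ b) := by rw [heq]
      _ = P * Monoid.PushoutI.base φ b := by group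
  -- show k ∈ range
  have hkr : k ∈ (φ i).range := by
    by_contra hknr
    -- build the big reduced word
    have hk1 : k ≠ 1 := fun h => hknr (h ▸ one_mem _)
    let L2 : List (Σ i, G i) := (tl.reverse.map fun p => ⟨p.1, p.2⁻¹⟩) ++ ⟨i, k⟩ :: tl
    have hL2ne : ∀ l ∈ L2, Sigma.snd l ≠ 1 := by
      intro l hl
      rcases List.mem_append.1 hl with h | h
      · obtain ⟨q, hq, rfl⟩ := List.mem_map.1 h
        simpa using hne1 q (List.mem_cons_of_mem _ (List.mem_reverse.1 hq))
      · rcases List.mem_cons.1 h with rfl | h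
        · exact hk1
        · exact hne1 _ (List.mem_cons_of_mem _ h)
    have hchtl : tl.Chain' fun l l' => Sigma.fst l ≠ Sigma.fst l' := hch.tail
    have hL2ch : L2.Chain' fun l l' => Sigma.fst l ≠ Sigma.fst l' := by
      apply List.IsChain.append
      · rw [List.isChain_map, List.isChain_reverse]
        exact hchtl.imp fun a b h => h.symm
      · exact List.isChain_cons.2 ⟨fun y hy => hhead y hy, hchtl⟩
      · intro x hx y hy
        rw [List.getLast?_map] at hx
        obtain ⟨q, hq, rfl⟩ := Option.map_eq_some_iff.1 hx
        rw [List.getLast?_reverse] at hq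
        have h3 := hhead q hq
        simp only [List.head?_cons, Option.mem_def, Option.some.injEq] at hy
        subst hy
        exact fun h4 => h3 h4.symm
    let W : Monoid.CoprodI.Word G := ⟨L2, hL2ne, hL2ch⟩
    have hWred : Monoid.PushoutI.Reduced φ W := by
      intro l hl
      rcases List.mem_append.1 hl with h | h
      · obtain ⟨q, hq, rfl⟩ := List.mem_map.1 h
        intro h'
        exact hred q (List.mem_cons_of_mem _ (List.mem_reverse.1 hq)) (inv_mem_iff.1 h')
      · rcases List.mem_cons.1 h with rfl | h
        · exact hknr
        · exact hred _ (List.mem_cons_of_mem _ h)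
    have hrev : ((tl.reverse.map fun p => (⟨p.1, p.2⁻¹⟩ : Σ i, G i)).map
          fun l => Monoid.PushoutI.of (φ := φ) l.1 l.2).prod
        = ((tl.map fun l => Monoid.PushoutI.of (φ := φ) l.1 l.2).prod)⁻¹ := by
      rw [List.prod_inv_reverse, List.map_map, List.map_reverse, List.map_map]
      congr 2
    have hWprod : ofCoprodI (φ := φ) W.prod
        = P⁻¹ * (Monoid.PushoutI.of (φ := φ) i k * P) := by
      rw [ofCoprodI_word_prod]
      show ((((tl.reverse.map fun p => (⟨p.1, p.2⁻¹⟩ : Σ i, G i)) ++ ⟨i, k⟩ :: tl)).map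
        fun l => Monoid.PushoutI.of (φ := φ) l.1 l.2).prod = _
      rw [List.map_append, List.prod_append, List.map_cons, List.prod_cons, hrev]
      have : P = (tl.map fun l => Monoid.PushoutI.of (φ := φ) l.1 l.2).prod := by
        rw [hP, ofCoprodI_word_prod]
      rw [← this]
    have hWmem : ofCoprodI (φ := φ) W.prod ∈ (Monoid.PushoutI.base φ).range := by
      have hcalc : P⁻¹ * (P * Monoid.PushoutI.base φ b) = Monoid.PushoutI.base φ b := by group
      rw [hWprod, heq', hcalc]
      exact ⟨b, rfl⟩
    have hempty := hWred.eq_empty_of_mem_range hinj hWmem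
    have h0 : (tl.reverse.map fun p => (⟨p.1, p.2⁻¹⟩ : Σ i, G i)) ++ ⟨i, k⟩ :: tl = [] :=
      congrArg Monoid.CoprodI.Word.toList hempty
    simp at h0
  -- malnormality in G i
  have hφa := hmal i g hg (φ i a) ⟨a, rfl⟩ hkr
  exact hinj i (by simpa using hφa)

/-- If `C` embeds as a malnormal subgroup of both `G₁` and `G₂`, then the image of `C`
in the amalgamated free product `G₁ ∗_C G₂` is malnormal. -/
theorem malnormal_amalgamated {C : Type*} [Group C] {G : Fin 2 → Type*}
    [∀ i, Group (G i)] (φ : ∀ i, C →* G i) (hinj : ∀ i, Function.Injective (φ i))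
    (hmal : ∀ i, IsMalnormal (φ i).range) :
    IsMalnormal (Monoid.PushoutI.base φ).range := by
  classical
  intro g hg x hx hconj
  obtain ⟨a, rfl⟩ := hx
  obtain ⟨b, hb⟩ := hconj
  obtain ⟨d⟩ := Monoid.PushoutI.NormalWord.transversal_nonempty φ hinj
  set n : Monoid.PushoutI.NormalWord d := g • (Monoid.PushoutI.NormalWord.empty : Monoid.PushoutI.NormalWord d) with hn
  have hgprod : g = Monoid.PushoutI.base φ n.head * ofCoprodI n.toWord.prod := by
    have hpn : n.prod = g := by
      rw [hn, Monoid.PushoutI.NormalWord.prod_smul, Monoid.PushoutI.NormalWord.prod_empty, mul_one]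
    rw [← hpn]; rfl
  have hred : Monoid.PushoutI.Reduced φ n.toWord := by
    rintro ⟨i, gi⟩ hgi ⟨c, hc⟩
    have hset : gi ∈ d.set i := n.normalized i gi hgi
    have h1 : gi ≠ 1 := n.toWord.ne_one _ hgi
    apply h1
    obtain ⟨u, hu, huniq⟩ := (d.compl i).existsUnique gi
    have e1 : ((⟨⟨gi, ⟨c, hc⟩⟩, ⟨1, d.one_mem i⟩⟩ : ((φ i).range : Set (G i)) × d.set i))
        = u := huniq _ (by simp)
    have e2 : ((⟨⟨1, one_mem _⟩, ⟨gi, hset⟩⟩ : ((φ i).range : Set (G i)) × d.set i))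
        = u := huniq _ (by simp)
    have e3 := e1.trans e2.symm
    have e4 := congrArg (fun p => (p.1 : G i)) e3
    simpa using e4
  have hne : n.toWord.toList ≠ [] := by
    intro h0
    apply hg
    have hp1 : n.toWord.prod = 1 := by
      rw [Word.prod, h0]; simp
    rw [hgprod, hp1, map_one, mul_one]
    exact ⟨n.head, rfl⟩
  have heq : Monoid.PushoutI.base φ (n.head⁻¹ * a * n.head) * ofCoprodI n.toWord.prod
      = ofCoprodI n.toWord.prod * Monoid.PushoutI.base φ b := by
    have hb' : g⁻¹ * Monoid.PushoutI.base φ a * g = Monoid.PushoutI.base φ b := hb.symm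
    rw [hgprod] at hb'
    set P : Monoid.PushoutI φ := ofCoprodI (φ := φ) n.toWord.prod with hP
    rw [mul_inv_rev] at hb'
    rw [map_mul, map_mul, map_inv]
    calc (Monoid.PushoutI.base φ n.head)⁻¹ * Monoid.PushoutI.base φ a
          * Monoid.PushoutI.base φ n.head * P
        = P * (P⁻¹ * (Monoid.PushoutI.base φ n.head)⁻¹ * Monoid.PushoutI.base φ a
            * (Monoid.PushoutI.base φ n.head * P)) := by group
      _ = P * Monoid.PushoutI.base φ b := by rw [hb']
  have h1 : n.head⁻¹ * a * n.head = 1 := aux_conj hinj hmal hred hne _ _ heq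
  have h2 : a = 1 := by
    have h3 := congrArg (fun c => n.head * c * n.head⁻¹) h1
    simpa [mul_assoc] using h3
  rw [h2, map_one]
end

section
/- Let G be a group, K ≤ G a subgroup, and δ₁ : K → G a homomorphism such that for every finite-index subgroup K₀ ≤ K the centralizer C_G(δ₁(K₀)) is trivial. Let F ⊆ G be a nonempty finite subset satisfying δ₁(k)⁻¹ F⁻¹F δ₁(k) = F⁻¹F for every k ∈ K. Then F consists of a single element. -/
open Pointwise

/-- Let `K ≤ G` and `δ₁ : K → G` a homomorphism such that for every finite-index subgroup
`K₀ ≤ K` the centralizer `C_G(δ₁(K₀))` is trivial. If `F ⊆ G` is a nonempty finite subset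
with `δ₁(k)⁻¹ F⁻¹F δ₁(k) = F⁻¹F` for every `k ∈ K`, then `F` is a singleton. -/
theorem singleton_of_invariant {G : Type*} [Group G] (K : Subgroup G) (δ₁ : ↥K →* G)
    (hcent : ∀ K₀ : Subgroup ↥K, K₀.FiniteIndex →
      Subgroup.centralizer (⇑δ₁ '' (K₀ : Set ↥K)) = ⊥)
    (F : Set G) (hne : F.Nonempty) (hfin : F.Finite)
    (hinv : ∀ k : ↥K, (fun x => (δ₁ k)⁻¹ * x * δ₁ k) '' (F⁻¹ * F) = F⁻¹ * F) :
    ∃ g : G, F = {g} := by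
  have hSfin : (F⁻¹ * F).Finite := (hfin.inv).mul hfin
  -- every element of F⁻¹ * F is 1
  have key : ∀ g ∈ F⁻¹ * F, g = 1 := by
    intro g hg
    -- conjugates stay in F⁻¹ * F
    have hconj : ∀ k : ↥K, δ₁ k * g * (δ₁ k)⁻¹ ∈ F⁻¹ * F := fun k => by
      have : (δ₁ k⁻¹)⁻¹ * g * δ₁ k⁻¹ ∈ F⁻¹ * F := by
        rw [← hinv k⁻¹]; exact Set.mem_image_of_mem _ hg
      simpa using this
    set K₀ : Subgroup ↥K := (Subgroup.centralizer {g}).comap δ₁ with hK₀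
    -- quotient K ⧸ K₀ injects into the finite set F⁻¹ * F
    have hfq : Finite (↥K ⧸ K₀) := by
      have : Finite ↥(F⁻¹ * F) := hSfin
      refine Finite.of_injective
        (Quotient.lift (fun k : ↥K => (⟨δ₁ k * g * (δ₁ k)⁻¹, hconj k⟩ : ↥(F⁻¹ * F)))
          ?_) ?_
      · intro a b hab
        have h : a⁻¹ * b ∈ K₀ := QuotientGroup.leftRel_apply.mp hab
        have h' : δ₁ (a⁻¹ * b) * g = g * δ₁ (a⁻¹ * b) :=
          Subgroup.mem_centralizer_singleton_iff.mp (Subgroup.mem_comap.mp h)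
        simp only [map_mul, map_inv] at h'
        refine Subtype.ext ?_
        show δ₁ a * g * (δ₁ a)⁻¹ = δ₁ b * g * (δ₁ b)⁻¹
        calc δ₁ a * g * (δ₁ a)⁻¹
            = δ₁ a * (g * ((δ₁ a)⁻¹ * δ₁ b)) * (δ₁ b)⁻¹ := by group
          _ = δ₁ a * ((δ₁ a)⁻¹ * δ₁ b * g) * (δ₁ b)⁻¹ := by rw [h']
          _ = δ₁ b * g * (δ₁ b)⁻¹ := by group
      · refine Quotient.ind₂ ?_
        intro a b hab
        have hab' : δ₁ a * g * (δ₁ a)⁻¹ = δ₁ b * g * (δ₁ b)⁻¹ := Subtype.ext_iff.mp hab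
        refine Quotient.sound (QuotientGroup.leftRel_apply.mpr ?_)
        refine Subgroup.mem_comap.mpr (Subgroup.mem_centralizer_singleton_iff.mpr ?_)
        simp only [map_mul, map_inv]
        calc (δ₁ a)⁻¹ * δ₁ b * g
            = (δ₁ a)⁻¹ * (δ₁ b * g * (δ₁ b)⁻¹) * δ₁ b := by group
          _ = (δ₁ a)⁻¹ * (δ₁ a * g * (δ₁ a)⁻¹) * δ₁ b := by rw [hab']
          _ = g * ((δ₁ a)⁻¹ * δ₁ b) := by group
    have hfi : K₀.FiniteIndex := Subgroup.finiteIndex_of_finite_quotient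
    have hg1 : g ∈ Subgroup.centralizer (⇑δ₁ '' (K₀ : Set ↥K)) := by
      rw [Subgroup.mem_centralizer_iff]
      rintro h ⟨k, hk, rfl⟩
      exact Subgroup.mem_centralizer_singleton_iff.mp (Subgroup.mem_comap.mp hk)
    rw [hcent K₀ hfi] at hg1
    exact hg1
  obtain ⟨f, hf⟩ := hne
  refine ⟨f, Set.eq_singleton_iff_unique_mem.mpr ⟨hf, fun f' hf' => ?_⟩⟩
  have h1 : f⁻¹ * f' ∈ F⁻¹ * F := Set.mul_mem_mul (Set.inv_mem_inv.mpr hf) hf'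
  have h2 := key _ h1
  exact (eq_of_inv_mul_eq_one h2).symm
end

section
/- Let G be a group and K ≤ G such that for every finite-index subgroup K₀ ≤ K, the centralizer C_{G×G}(Δ(K₀)) is trivial, where Δ : K → G × G is the diagonal embedding k ↦ (k,k). Suppose δ : G → G×G is a homomorphism and F ⊆ G×G is a finite nonempty set with (k,k)·F·δ(k)⁻¹ = F for all k ∈ K. Then there exists a single element (h,l) ∈ G×G with F = {(h,l)} and δ(k) = (h,l)⁻¹(k,k)(h,l) for all k ∈ K. -/
/-- Let `K ≤ G` be such that for every finite-index subgroup `K₀ ≤ K` the centralizer in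
`G × G` of the diagonal `Δ(K₀) = {(k,k)}` is trivial. If `δ : G → G × G` is a homomorphism
and `F ⊆ G × G` is a finite nonempty set with `(k,k)·F·δ(k)⁻¹ = F` for all `k ∈ K`, then
`F = {(h,l)}` for a single element and `δ(k) = (h,l)⁻¹ (k,k) (h,l)` for all `k ∈ K`. -/
theorem diagonal_invariant_singleton {G : Type*} [Group G] (K : Subgroup G)
    (hcent : ∀ K₀ : Subgroup ↥K, K₀.FiniteIndex →
      Subgroup.centralizer ((fun k : ↥K => ((k : G), (k : G))) '' (K₀ : Set ↥K)) = ⊥)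
    (δ : G →* G × G) (F : Set (G × G)) (hfin : F.Finite) (hne : F.Nonempty)
    (hinv : ∀ k ∈ K, (fun x => (k, k) * x * (δ k)⁻¹) '' F = F) :
    ∃ h l : G, F = {(h, l)} ∧
      ∀ k ∈ K, δ k = (h, l)⁻¹ * (k, k) * (h, l) := by
  classical
  -- the set F F⁻¹
  set S : Set (G × G) := (fun p : (G × G) × (G × G) => p.1 * p.2⁻¹) '' (F ×ˢ F) with hS
  have hSfin : S.Finite := (hfin.prod hfin).image _
  have hstep : ∀ k ∈ K, ∀ a ∈ F, (k, k) * a * (δ k)⁻¹ ∈ F := by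
    intro k hk a ha
    rw [← hinv k hk]; exact ⟨a, ha, rfl⟩
  -- diagonal hom
  set dm : ↥K →* G × G := MonoidHom.prod K.subtype K.subtype with hdm
  have horb : ∀ (k : ↥K), ∀ x ∈ S, dm k * x * (dm k)⁻¹ ∈ S := by
    rintro k x ⟨⟨a, b⟩, ⟨ha, hb⟩, rfl⟩
    refine ⟨((k.1, k.1) * a * (δ k.1)⁻¹, (k.1, k.1) * b * (δ k.1)⁻¹),
      ⟨hstep k.1 k.2 a ha, hstep k.1 k.2 b hb⟩, ?_⟩
    simp only [hdm, MonoidHom.prod_apply, Subgroup.coe_subtype]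
    group
  have key : ∀ a ∈ F, ∀ b ∈ F, a = b := by
    intro a ha b hb
    set x : G × G := a * b⁻¹ with hx
    have hxS : x ∈ S := ⟨(a, b), ⟨ha, hb⟩, rfl⟩
    set K₀ : Subgroup ↥K := (Subgroup.centralizer {x}).comap dm with hK₀
    have hmem : ∀ k : ↥K, k ∈ K₀ ↔ x * dm k = dm k * x := by
      intro k
      simp [hK₀, Subgroup.mem_comap, Subgroup.mem_centralizer_iff]
    -- finite index of K₀
    have hconj : ∀ k₁ k₂ : ↥K, k₁⁻¹ * k₂ ∈ K₀ →
        dm k₁ * x * (dm k₁)⁻¹ = dm k₂ * x * (dm k₂)⁻¹ := by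
      intro k₁ k₂ h
      rw [hmem] at h
      rw [map_mul, map_inv] at h
      have := congrArg (fun y => dm k₁ * y * (dm k₂)⁻¹) h
      simpa [mul_assoc] using this
    have hconj' : ∀ k₁ k₂ : ↥K,
        dm k₁ * x * (dm k₁)⁻¹ = dm k₂ * x * (dm k₂)⁻¹ → k₁⁻¹ * k₂ ∈ K₀ := by
      intro k₁ k₂ h
      rw [hmem, map_mul, map_inv]
      have := congrArg (fun y => (dm k₁)⁻¹ * y * dm k₂) h
      simpa [mul_assoc] using this
    haveI : Finite ↥S := hSfin.to_subtype
    have hfinq : Finite (↥K ⧸ K₀) := by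
      have hwd : ∀ k₁ k₂ : ↥K, (QuotientGroup.leftRel K₀) k₁ k₂ →
          (⟨dm k₁ * x * (dm k₁)⁻¹, horb k₁ x hxS⟩ : ↥S) =
          ⟨dm k₂ * x * (dm k₂)⁻¹, horb k₂ x hxS⟩ := by
        intro k₁ k₂ h
        rw [QuotientGroup.leftRel_apply] at h
        exact Subtype.ext (hconj k₁ k₂ h)
      let f : ↥K ⧸ K₀ → ↥S :=
        Quotient.lift (fun k : ↥K => (⟨dm k * x * (dm k)⁻¹, horb k x hxS⟩ : ↥S)) hwd
      have hinj : Function.Injective f := by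
        intro q₁ q₂
        induction q₁ using Quotient.inductionOn with | h k₁ =>
        induction q₂ using Quotient.inductionOn with | h k₂ =>
        intro h
        have : dm k₁ * x * (dm k₁)⁻¹ = dm k₂ * x * (dm k₂)⁻¹ := congrArg Subtype.val h
        exact Quotient.sound ((QuotientGroup.leftRel_apply).2 (hconj' k₁ k₂ this))
      exact Finite.of_injective f hinj
    haveI : K₀.FiniteIndex := Subgroup.finiteIndex_of_finite_quotient
    have hx1 : x ∈ Subgroup.centralizer
        ((fun k : ↥K => ((k : G), (k : G))) '' (K₀ : Set ↥K)) := by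
      rw [Subgroup.mem_centralizer_iff]
      rintro g ⟨k, hk, rfl⟩
      have := (hmem k).1 hk
      simpa [hdm] using this.symm
    rw [hcent K₀ ‹_›] at hx1
    have : x = 1 := hx1
    exact mul_inv_eq_one.1 this
  obtain ⟨⟨h, l⟩, hf⟩ := hne
  refine ⟨h, l, ?_, ?_⟩
  · ext y
    constructor
    · intro hy; exact key y hy _ hf
    · intro hy; rwa [Set.mem_singleton_iff.1 hy]
  · intro k hk
    have := hstep k hk (h, l) hf
    have heq : (k, k) * (h, l) * (δ k)⁻¹ = (h, l) := key _ this _ hf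
    have h2 : (h, l) * δ k = (k, k) * (h, l) := by
      have := congrArg (fun y => y * δ k) heq
      simpa [mul_assoc] using this.symm
    rw [mul_assoc, ← h2, ← mul_assoc, inv_mul_cancel, one_mul]
end

section
/- Let C be an icc group that is malnormal in a group G. Then the virtual centralizer of C in G is trivial: vC_G(C) = {1}. -/
/-- Let `C` be an icc group (nontrivial, with every nontrivial conjugacy class infinite)
that is malnormal in `G`. Then the virtual centralizer of `C` in `G` is trivial: every
`g ∈ G` with `[C : C_C(g)] < ∞` satisfies `g = 1`. -/
theorem virtual_centralizer_trivial {G : Type*} [Group G] (C : Subgroup G)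
    [Nontrivial ↥C]
    (hicc : ∀ c : ↥C, c ≠ 1 → (conjugatesOf c).Infinite)
    (hmal : ∀ g : G, g ∉ C → ∀ x : G, x ∈ C → g⁻¹ * x * g ∈ C → x = 1) :
    ∀ g : G, (Subgroup.centralizer {g}).relIndex C ≠ 0 → g = 1 := by
  intro g hg
  set H : Subgroup ↥C := (Subgroup.centralizer {g}).subgroupOf C with hH
  have hgidx : H.index ≠ 0 := hg
  -- C is infinite
  obtain ⟨c0, hc0⟩ := exists_ne (1 : ↥C)
  haveI : Infinite ↥C :=
    Set.infinite_univ_iff.mp ((hicc c0 hc0).mono (Set.subset_univ _))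
  -- step 1 : g ∈ C
  have hgC : g ∈ C := by
    by_contra hgC
    have hne : H ≠ ⊥ := by
      intro hbot
      rw [hbot, Subgroup.index_bot, Nat.card_eq_zero_of_infinite] at hgidx
      exact hgidx rfl
    obtain ⟨x, hx1⟩ := Subgroup.ne_bot_iff_exists_ne_one.mp hne
    have hxc : g * (x : ↥C) = (x : ↥C) * g := by
      have := (Subgroup.mem_subgroupOf.mp x.2)
      exact Subgroup.mem_centralizer_iff.mp this g rfl
    have : (x : ↥C) = (1 : G) := by
      apply hmal g hgC _ (x : ↥C).2
      have : g⁻¹ * ((x : ↥C) : G) * g = ((x : ↥C) : G) := by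
        rw [mul_assoc, ← hxc]; group
      rw [this]; exact (x : ↥C).2
    exact hx1 (Subtype.ext (Subtype.ext this))
  -- step 2 : g = 1
  by_contra hg1
  set gc : ↥C := ⟨g, hgC⟩ with hgc
  have hgc1 : gc ≠ 1 := fun h => hg1 (congrArg Subtype.val h)
  haveI : Finite (↥C ⧸ H) := Nat.finite_of_card_ne_zero hgidx
  have hsub : conjugatesOf gc ⊆
      Set.range (fun q : ↥C ⧸ H => (Quotient.out q) * gc * (Quotient.out q)⁻¹) := by
    rintro x hx
    obtain ⟨c, hc⟩ := isConj_iff.1 hx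
    subst hc
    refine ⟨QuotientGroup.mk c, ?_⟩
    set r : ↥C := Quotient.out (QuotientGroup.mk (s := H) c) with hr
    have hmk : (QuotientGroup.mk r : ↥C ⧸ H) = QuotientGroup.mk c := by
      simpa [hr] using Quotient.out_eq (QuotientGroup.mk (s := H) c)
    have hmem : r⁻¹ * c ∈ H := QuotientGroup.eq.mp hmk
    have hcomm : g * ((r⁻¹ * c : ↥C) : G) = ((r⁻¹ * c : ↥C) : G) * g :=
      Subgroup.mem_centralizer_iff.mp (Subgroup.mem_subgroupOf.mp hmem) g rfl
    apply Subtype.ext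
    push_cast
    push_cast at hcomm
    have : (r : G) * (g * ((r : G)⁻¹ * c)) = (r : G) * (((r : G)⁻¹ * c) * g) := by
      rw [hcomm]
    calc (r : G) * g * (r : G)⁻¹ = ((r:G) * (g * ((r:G)⁻¹ * (c:G)))) * (c:G)⁻¹ := by group
      _ = ((r:G) * (((r:G)⁻¹ * (c:G)) * g)) * (c:G)⁻¹ := by rw [this]
      _ = (c:G) * g * (c:G)⁻¹ := by group
  exact hicc gc hgc1 ((Set.finite_range _).subset hsub)
end
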